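/- Let 𝔞 be a Lie algebra with invariant metric B_𝔞, and suppose T, F: 𝔞 → 𝔞 are linear maps with e ∈ 𝔞 such that: F is a derivation of 𝔞, T([a,b]) = [T(a),b] = [a,T(b)] for all a,b, T∘F = F∘T = ad(e), and Ker(F) = C_𝔞(e) (the centralizer of e). Then F is an inner derivation of 𝔞. -/

import Mathlib

/-- Lemma 1.9: let `𝔞` be a finite-dimensional Lie algebra with an invariant metric
`B_𝔞`, and let `T, F : 𝔞 → 𝔞` be linear maps and `e ∈ 𝔞` such that `F` is a
derivation, `T` is in the centroid (`T[a,b] = [T a, b] = [a, T b]`),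
`T∘F = F∘T = ad(e)` and `Ker F = C_𝔞(e)`. Then `F` is an inner derivation. -/
theorem F_is_inner_derivation
    {K a : Type*} [Field K] [CharZero K] [LieRing a] [LieAlgebra K a]
    [FiniteDimensional K a]
    (B : LinearMap.BilinForm K a)
    (hsymm : ∀ x y : a, B x y = B y x)
    (hnondeg : B.Nondegenerate)
    (hinv : ∀ x y z : a, B ⁅x, y⁆ z = B x ⁅y, z⁆)
    (T Fm : a →ₗ[K] a) (e : a)
    (hFder : ∀ x y : a, Fm ⁅x, y⁆ = ⁅Fm x, y⁆ + ⁅x, Fm y⁆)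
    (hTcent : ∀ x y : a, T ⁅x, y⁆ = ⁅T x, y⁆ ∧ T ⁅x, y⁆ = ⁅x, T y⁆)
    (hTF : ∀ x : a, T (Fm x) = ⁅e, x⁆)
    (hFT : ∀ x : a, Fm (T x) = ⁅e, x⁆)
    (hkerF : ∀ x : a, Fm x = 0 ↔ ⁅x, e⁆ = 0) :
    ∃ c : a, ∀ x : a, Fm x = ⁅c, x⁆ := by
  classical
  -- Step A : if T (Fm x) = 0 then Fm x = 0
  have hA : ∀ x : a, T (Fm x) = 0 → Fm x = 0 := by
    intro x hx
    rw [hTF] at hx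
    rw [hkerF, ← lie_skew, hx, neg_zero]
  -- F and T commute
  have hcommTF : ∀ x : a, Fm (T x) = T (Fm x) := fun x => (hFT x).trans (hTF x).symm
  -- Step B : if T^n (Fm x) = 0 then Fm x = 0
  have hB : ∀ n : ℕ, ∀ x : a, (T ^ n) (Fm x) = 0 → Fm x = 0 := by
    intro n
    induction n with
    | zero => intro x hx; simpa using hx
    | succ n ih =>
      intro x hx
      have h1 : (T ^ n) (Fm (T x)) = 0 := by
        rw [hcommTF]
        have : (T ^ n) (T (Fm x)) = (T ^ (n + 1)) (Fm x) := by
          rw [pow_succ]; rfl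
        rw [this]; exact hx
      have h2 : Fm (T x) = 0 := ih (T x) h1
      exact hA x (by rw [← hcommTF]; exact h2)
  -- centroid property for powers of T
  have hTn : ∀ (n : ℕ) (y x : a), ⁅(T ^ n) y, x⁆ = (T ^ n) ⁅y, x⁆ := by
    intro n
    induction n with
    | zero => intro y x; simp
    | succ n ih =>
      intro y x
      rw [pow_succ]
      have h1 : (T ^ n * T) y = (T ^ n) (T y) := rfl
      have h2 : (T ^ n * T) ⁅y, x⁆ = (T ^ n) (T ⁅y, x⁆) := rfl
      rw [h1, h2, ih (T y) x, (hTcent y x).1]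
  -- centroid property for polynomials in T
  have hD : ∀ (p : Polynomial K) (y x : a),
      ⁅(Polynomial.aeval T p) y, x⁆ = (Polynomial.aeval T p) ⁅y, x⁆ := by
    intro p
    induction p using Polynomial.induction_on' with
    | add p q hp hq =>
      intro y x
      simp only [map_add, LinearMap.add_apply, add_lie, hp, hq]
    | monomial n c =>
      intro y x
      simp only [Polynomial.aeval_monomial, Module.End.mul_apply,
        Module.algebraMap_end_apply, LinearMap.smul_apply, smul_lie, hTn]
  -- F commutes with powers of T
  have hFn : ∀ (n : ℕ) (x : a), Fm ((T ^ n) x) = (T ^ n) (Fm x) := by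
    intro n
    induction n with
    | zero => intro x; simp
    | succ n ih =>
      intro x
      rw [pow_succ]
      have h1 : (T ^ n * T) x = (T ^ n) (T x) := rfl
      have h2 : (T ^ n * T) (Fm x) = (T ^ n) (T (Fm x)) := rfl
      rw [h1, h2, ih (T x), hcommTF]
  -- F commutes with polynomials in T
  have hE : ∀ (p : Polynomial K) (x : a),
      Fm ((Polynomial.aeval T p) x) = (Polynomial.aeval T p) (Fm x) := by
    intro p
    induction p using Polynomial.induction_on' with
    | add p q hp hq =>
      intro x
      simp only [map_add, LinearMap.add_apply, hp, hq]
    | monomial n c =>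
      intro x
      simp only [Polynomial.aeval_monomial, Module.End.mul_apply,
        Module.algebraMap_end_apply, LinearMap.smul_apply, map_smul, hFn]
  -- the minimal polynomial of T
  have hint : IsIntegral K T := LinearMap.isIntegral T
  set m : Polynomial K := minpoly K T with hmdef
  have hm0 : m ≠ 0 := minpoly.ne_zero hint
  obtain ⟨q, hmq, hqndvd⟩ :=
    m.exists_eq_pow_rootMultiplicity_mul_and_not_dvd hm0 0
  set k : ℕ := m.rootMultiplicity 0 with hk
  rw [Polynomial.C_0, sub_zero] at hmq hqndvd
  have hc0 : q.coeff 0 ≠ 0 := fun h => hqndvd (Polynomial.X_dvd_iff.mpr h)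
  set c0 : K := q.coeff 0 with hc0def
  -- operator identities
  set A : a →ₗ[K] a := Polynomial.aeval T q.divX with hAdef
  have haq : Polynomial.aeval T q = T * A + c0 • 1 := by
    have := Polynomial.X_mul_divX_add q
    calc Polynomial.aeval T q
        = Polynomial.aeval T (Polynomial.X * q.divX + Polynomial.C c0) := by rw [this]
      _ = T * A + c0 • 1 := by
          simp [map_add, map_mul, Polynomial.aeval_X, Polynomial.aeval_C,
            Algebra.algebraMap_eq_smul_one, ← hAdef]
  have hmz : (Polynomial.aeval T) m = 0 := minpoly.aeval K T
  have h0 : T ^ k * (T * A + c0 • 1) = 0 := by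
    rw [← haq]
    calc T ^ k * Polynomial.aeval T q = Polynomial.aeval T (Polynomial.X ^ k * q) := by
          simp [map_mul, map_pow]
      _ = 0 := by rw [← hmq]; exact hmz
  -- derive T^k = T^(k+1) * g with g := (-c0⁻¹) • A
  set g : a →ₗ[K] a := (-c0⁻¹) • A with hgdef
  have hkey : T ^ k = T ^ (k + 1) * g := by
    have h1 : T ^ (k + 1) * A + c0 • T ^ k = 0 := by
      have := h0
      rw [mul_add] at this
      rw [← mul_assoc, ← pow_succ] at this
      rw [mul_smul_comm, mul_one] at this
      exact this
    have h2 : T ^ (k + 1) * A = -(c0 • T ^ k) := eq_neg_of_add_eq_zero_left h1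
    rw [hgdef, mul_smul_comm, h2, smul_neg, smul_smul]
    rw [neg_mul, neg_smul, neg_neg, inv_mul_cancel₀ hc0, one_smul]
  -- properties of g
  have hgcent : ∀ y x : a, ⁅g y, x⁆ = g ⁅y, x⁆ := by
    intro y x
    rw [hgdef]
    simp only [LinearMap.smul_apply, smul_lie, hAdef, hD]
  have hgF : ∀ x : a, Fm (g x) = g (Fm x) := by
    intro x
    rw [hgdef]
    simp only [LinearMap.smul_apply, map_smul, hAdef, hE]
  have hgT : ∀ x : a, g (T x) = T (g x) := by
    intro x
    rw [hgdef]
    simp only [LinearMap.smul_apply, map_smul]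
    congr 1
    have h1 : A (T x) = (Polynomial.aeval T (q.divX * Polynomial.X)) x := by
      simp [map_mul, hAdef]
    have h2 : T (A x) = (Polynomial.aeval T (Polynomial.X * q.divX)) x := by
      simp [map_mul, hAdef]
    rw [h1, h2, mul_comm q.divX]
  -- conclusion with c := g e
  refine ⟨g e, fun x => ?_⟩
  have hbr : ⁅g e, x⁆ = T (g (Fm x)) := by
    rw [hgcent e x, ← hTF x, hgT]
  have hu : Fm (x - T (g x)) = Fm x - T (g (Fm x)) := by
    rw [map_sub, hcommTF, hgF]
  have htk : (T ^ k) (Fm (x - T (g x))) = 0 := by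
    rw [hu, map_sub]
    have h1 : (T ^ k) (T (g (Fm x))) = (T ^ (k + 1) * g) (Fm x) := by
      rw [pow_succ]; rfl
    rw [h1, ← hkey, sub_self]
  have := hB k (x - T (g x)) htk
  rw [hu] at this
  have h2 : Fm x = T (g (Fm x)) := by
    have := sub_eq_zero.mp this
    exact this
  rw [h2, hbr]
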